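/- For permutations w, y ∈ S_n with w ≤_D y in the right weak Bruhat order, and for any a ∈ {1,…,n+1}, one has [w̄_a, a] ≤_D [ȳ_a, a] in S_{n+1}, where w̄_a is obtained from the word of w by increasing all letters ≥ a by one and appending a. -/

import Mathlib

set_option linter.unnecessarySeqFocus false


/-- Number of inversions (= Coxeter length) of a permutation of `Fin n`. -/
def invCount {n : ℕ} (w : Equiv.Perm (Fin n)) : ℕ :=
  (Finset.univ.filter (fun p : Fin n × Fin n => p.1 < p.2 ∧ w p.2 < w p.1)).card

/-- The right weak Bruhat order: `w ≤_D y` iff `y = w * x` with `ℓ(y) = ℓ(w) + ℓ(x)`. -/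
def weakLE {n : ℕ} (w y : Equiv.Perm (Fin n)) : Prop :=
  ∃ x : Equiv.Perm (Fin n), y = w * x ∧ invCount y = invCount w + invCount x

/-- Robinson–Schensted row insertion of a letter into a tableau (list of rows). -/
def rowInsert : List (List ℕ) → ℕ → List (List ℕ)
  | [], a => [[a]]
  | r :: rs, a =>
    match r.dropWhile (· < a) with
    | [] => (r ++ [a]) :: rs
    | x :: rest => (r.takeWhile (· < a) ++ a :: rest) :: rowInsert rs x

/-- The Robinson–Schensted insertion tableau `P(w)` of a word `w`. -/
def RS (w : List ℕ) : List (List ℕ) := w.foldl rowInsert []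

/-- The word form `[w(1),…,w(n)]` of a permutation, with 1-based letters. -/
def wordOf {n : ℕ} (w : Equiv.Perm (Fin n)) : List ℕ :=
  (List.finRange n).map (fun k => (w k : ℕ) + 1)

/-- `w̄_a`: increase every letter `≥ a` by one. -/
def barWord (a : ℕ) (l : List ℕ) : List ℕ := l.map (fun x => if x < a then x else x + 1)

/-- The right weak Bruhat order on words of permutations: `u ≤_D v` iff every
inversion of `u` (as a pair of values) is an inversion of `v`; the position of a
value `i` in the word `u` is `u.indexOf i`, i.e. `u⁻¹(i)`. -/
def wordLE (u v : List ℕ) : Prop :=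
  ∀ i j : ℕ, i < j → u.idxOf j < u.idxOf i → v.idxOf j < v.idxOf i

theorem Equiv.Perm.apply_inv_self {α : Type*} (f : Equiv.Perm α) (x : α) : f (f⁻¹ x) = x :=
  f.apply_symm_apply x

theorem Equiv.Perm.inv_apply_self {α : Type*} (f : Equiv.Perm α) (x : α) : f⁻¹ (f x) = x :=
  f.symm_apply_apply x

theorem invCount_inv {n : ℕ} (w : Equiv.Perm (Fin n)) : invCount w⁻¹ = invCount w := by
  unfold invCount
  refine Finset.card_bij' (fun p _ => (w⁻¹ p.2, w⁻¹ p.1)) (fun q _ => (w q.2, w q.1)) ?_ ?_ ?_ ?_ <;>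
    simp_all [Finset.mem_filter]

theorem invCount_xor {n : ℕ} (u z : Equiv.Perm (Fin n)) :
    invCount z = (Finset.univ.filter (fun p : Fin n × Fin n =>
      p.1 < p.2 ∧ ¬(u p.2 < u p.1 ↔ z (u p.2) < z (u p.1)))).card := by
  unfold invCount
  refine Finset.card_bij'
    (fun q _ => if u⁻¹ q.1 < u⁻¹ q.2 then (u⁻¹ q.1, u⁻¹ q.2) else (u⁻¹ q.2, u⁻¹ q.1))
    (fun p _ => if u p.1 < u p.2 then (u p.1, u p.2) else (u p.2, u p.1)) ?_ ?_ ?_ ?_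
  · rintro ⟨q1, q2⟩ hq
    simp only [Finset.mem_filter, Finset.mem_univ, true_and] at hq ⊢
    rcases hq with ⟨hlt, hz⟩
    have hne : u⁻¹ q1 ≠ u⁻¹ q2 := fun e => absurd (u⁻¹.injective e) (ne_of_lt hlt)
    rcases lt_or_gt_of_ne hne with h | h
    · rw [if_pos h]
      refine ⟨h, ?_⟩
      simp only [Equiv.Perm.apply_inv_self]
      intro hiff
      exact absurd (hiff.mpr hz) (not_lt_of_gt hlt)
    · rw [if_neg (not_lt_of_gt h)]
      refine ⟨h, ?_⟩
      simp only [Equiv.Perm.apply_inv_self]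
      intro hiff
      exact absurd (hiff.mp hlt) (not_lt_of_gt hz)
  · rintro ⟨p1, p2⟩ hp
    simp only [Finset.mem_filter, Finset.mem_univ, true_and] at hp ⊢
    rcases hp with ⟨hlt, hx⟩
    have hne : u p1 ≠ u p2 := fun e => absurd (u.injective e) (ne_of_lt hlt)
    rcases lt_or_gt_of_ne hne with h | h
    · rw [if_pos h]
      refine ⟨h, ?_⟩
      by_contra hc
      exact hx ⟨fun ha => absurd ha (not_lt_of_gt h), fun hb => absurd hb hc⟩
    · rw [if_neg (not_lt_of_gt h)]
      refine ⟨h, ?_⟩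
      have hb : ¬ z (u p2) < z (u p1) := fun hb => hx ⟨fun _ => hb, fun _ => h⟩
      dsimp only
      exact lt_of_le_of_ne (not_lt.mp hb) (fun e => hne (z.injective e))
  · rintro ⟨q1, q2⟩ hq
    simp only [Finset.mem_filter, Finset.mem_univ, true_and] at hq
    have hne : u⁻¹ q1 ≠ u⁻¹ q2 := fun e => absurd (u⁻¹.injective e) (ne_of_lt hq.1)
    rcases lt_or_gt_of_ne hne with h | h
    · dsimp only
      rw [if_pos h]
      dsimp only
      simp only [Equiv.Perm.apply_inv_self]
      rw [if_pos hq.1]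
    · dsimp only
      rw [if_neg (not_lt_of_gt h)]
      dsimp only
      simp only [Equiv.Perm.apply_inv_self]
      rw [if_neg (not_lt_of_gt hq.1)]
  · rintro ⟨p1, p2⟩ hp
    simp only [Finset.mem_filter, Finset.mem_univ, true_and] at hp
    have hne : u p1 ≠ u p2 := fun e => absurd (u.injective e) (ne_of_lt hp.1)
    rcases lt_or_gt_of_ne hne with h | h
    · dsimp only
      rw [if_pos h]
      dsimp only
      simp only [Equiv.Perm.inv_apply_self]
      rw [if_pos hp.1]
    · dsimp only
      rw [if_neg (not_lt_of_gt h)]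
      dsimp only
      simp only [Equiv.Perm.inv_apply_self]
      rw [if_neg (not_lt_of_gt hp.1)]

theorem perm_inv_mono {n : ℕ} {w y : Equiv.Perm (Fin n)} (h : weakLE w y) :
    ∀ p q : Fin n, p < q → w⁻¹ q < w⁻¹ p → y⁻¹ q < y⁻¹ p := by
  obtain ⟨x, hyx, hcount⟩ := h
  set u := w⁻¹ with hu
  set z := x⁻¹ with hz
  have hv : y⁻¹ = z * u := by rw [hyx]; exact mul_inv_rev w x
  have hc' : invCount (z * u) = invCount u + invCount z := by
    rw [← hv, invCount_inv, invCount_inv, invCount_inv, hcount]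
  -- finsets
  set A := Finset.univ.filter (fun p : Fin n × Fin n => p.1 < p.2 ∧ u p.2 < u p.1) with hA
  set B := Finset.univ.filter (fun p : Fin n × Fin n => p.1 < p.2 ∧ (z * u) p.2 < (z * u) p.1) with hB
  set S := Finset.univ.filter (fun p : Fin n × Fin n =>
      p.1 < p.2 ∧ ¬(u p.2 < u p.1 ↔ z (u p.2) < z (u p.1))) with hS
  have hSB : S = (A \ B) ∪ (B \ A) := by
    ext p
    simp only [hA, hB, hS, Finset.mem_union, Finset.mem_sdiff, Finset.mem_filter,
      Finset.mem_univ, true_and]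
    simp only [Equiv.Perm.mul_apply]
    tauto
  have hcardS : invCount z = S.card := invCount_xor u z
  have hdisj : Disjoint (A \ B) (B \ A) := by
    refine Finset.disjoint_left.mpr ?_
    intro p hp hp'
    simp only [Finset.mem_sdiff] at hp hp'
    exact hp.2 hp'.1
  have h1 : S.card = (A \ B).card + (B \ A).card := by
    rw [hSB, Finset.card_union_of_disjoint hdisj]
  have h2 : (A \ B).card + (A ∩ B).card = A.card := Finset.card_sdiff_add_card_inter A B
  have h3 : (B \ A).card + (B ∩ A).card = B.card := Finset.card_sdiff_add_card_inter B A
  have h4 : (A ∩ B) = (B ∩ A) := Finset.inter_comm A B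
  have hcB : B.card = A.card + ((A \ B).card + (B \ A).card) := by
    rw [← h1, ← hcardS]
    exact hc'
  have hAB0 : (A \ B).card = 0 := by
    rw [h4] at h2
    omega
  have hsub : A ⊆ B := by
    intro p hp
    by_contra hpb
    have : p ∈ A \ B := Finset.mem_sdiff.mpr ⟨hp, hpb⟩
    have := Finset.card_pos.mpr ⟨p, this⟩
    omega
  intro p q hpq hw
  have : (p, q) ∈ A := by
    simp only [hA, Finset.mem_filter, Finset.mem_univ, true_and]
    exact ⟨hpq, hw⟩
  have := hsub this
  simp only [hB, Finset.mem_filter, Finset.mem_univ, true_and] at this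
  rw [hv]
  exact this.2

theorem indexOf_map_inj {α β : Type*} [DecidableEq α] [DecidableEq β] {f : α → β}
    (hf : Function.Injective f) (a : α) (l : List α) :
    (l.map f).idxOf (f a) = l.idxOf a := by
  induction l with
  | nil => rfl
  | cons b t ih =>
    by_cases hb : b = a
    · subst hb; simp
    · rw [List.map_cons, List.idxOf_cons_ne _ (fun e => hb (hf e)),
        List.idxOf_cons_ne _ hb, ih]

theorem length_wordOf {n : ℕ} (w : Equiv.Perm (Fin n)) : (wordOf w).length = n := by
  simp [wordOf]

theorem mem_wordOf {n : ℕ} (w : Equiv.Perm (Fin n)) (m : ℕ) :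
    m ∈ wordOf w ↔ 1 ≤ m ∧ m ≤ n := by
  simp only [wordOf, List.mem_map, List.mem_finRange, true_and]
  constructor
  · rintro ⟨k, rfl⟩
    have := (w k).isLt
    omega
  · rintro ⟨hm1, hm2⟩
    refine ⟨w⁻¹ ⟨m - 1, by omega⟩, ?_⟩
    rw [Equiv.Perm.apply_inv_self]
    simp; omega

theorem indexOf_wordOf {n : ℕ} (w : Equiv.Perm (Fin n)) (m : ℕ) (hm1 : 1 ≤ m) (hm2 : m ≤ n) :
    (wordOf w).idxOf m = (w⁻¹ ⟨m - 1, by omega⟩ : ℕ) := by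
  have hfinj : Function.Injective (fun k : Fin n => (w k : ℕ) + 1) := by
    intro k₁ k₂ e
    dsimp only at e
    exact w.injective (Fin.val_injective (by omega))
  have hm : m = (fun k : Fin n => (w k : ℕ) + 1) (w⁻¹ ⟨m - 1, by omega⟩) := by
    simp only [Equiv.Perm.apply_inv_self]
    omega
  rw [wordOf]
  conv_lhs => rw [hm]
  rw [indexOf_map_inj hfinj, List.idxOf_finRange]

theorem wordLE_wordOf {n : ℕ} {w y : Equiv.Perm (Fin n)} (h : weakLE w y) :
    wordLE (wordOf w) (wordOf y) := by
  intro i j hij hidx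
  have hile : (wordOf w).idxOf i ≤ n := by
    have := List.idxOf_le_length (a := i) (l := wordOf w)
    simpa [length_wordOf] using this
  have hj : j ∈ wordOf w := by
    rw [← List.idxOf_lt_length_iff, length_wordOf]; omega
  rw [mem_wordOf] at hj
  by_cases hi : 1 ≤ i ∧ i ≤ n
  · rw [indexOf_wordOf w i hi.1 hi.2, indexOf_wordOf w j hj.1 hj.2] at hidx
    rw [indexOf_wordOf y i hi.1 hi.2, indexOf_wordOf y j hj.1 hj.2]
    have hpq : (⟨i - 1, by omega⟩ : Fin n) < ⟨j - 1, by omega⟩ := by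
      simp only [Fin.mk_lt_mk]; omega
    have := perm_inv_mono h ⟨i - 1, by omega⟩ ⟨j - 1, by omega⟩ hpq (by exact hidx)
    exact this
  · have hiy : (wordOf y).idxOf i = n := by
      have := List.idxOf_of_notMem (l := wordOf y) (a := i)
        (by rw [mem_wordOf]; omega)
      simpa [length_wordOf] using this
    have hjy : (wordOf y).idxOf j < n := by
      have := List.idxOf_lt_length_iff.mpr ((mem_wordOf y j).mpr ⟨hj.1, hj.2⟩)
      simpa [length_wordOf] using this
    omega

theorem bar_inj (a : ℕ) : Function.Injective (fun x : ℕ => if x < a then x else x + 1) := by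
  intro x y e
  dsimp only at e
  split_ifs at e <;> omega

theorem a_not_mem_bar (a : ℕ) (l : List ℕ) : a ∉ barWord a l := by
  simp only [barWord, List.mem_map, not_exists]
  rintro x ⟨_, hx⟩
  split_ifs at hx <;> omega

theorem length_barW {n : ℕ} (a : ℕ) (w : Equiv.Perm (Fin n)) :
    (barWord a (wordOf w) ++ [a]).length = n + 1 := by
  simp [barWord, wordOf]

theorem indexOf_a_barW {n : ℕ} (a : ℕ) (w : Equiv.Perm (Fin n)) :
    (barWord a (wordOf w) ++ [a]).idxOf a = n := by
  rw [List.idxOf_append_of_notMem (a_not_mem_bar a _)]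
  simp [barWord, wordOf]

theorem indexOf_bar {n : ℕ} (a m' : ℕ) (w : Equiv.Perm (Fin n)) (hm' : m' ∈ wordOf w) :
    (barWord a (wordOf w) ++ [a]).idxOf (if m' < a then m' else m' + 1)
      = (wordOf w).idxOf m' := by
  have hmem : (if m' < a then m' else m' + 1) ∈ barWord a (wordOf w) :=
    List.mem_map.mpr ⟨m', hm', rfl⟩
  rw [List.idxOf_append_of_mem hmem, barWord, indexOf_map_inj (bar_inj a)]

theorem mem_barW {n : ℕ} (a : ℕ) (w : Equiv.Perm (Fin n)) (h1 : 1 ≤ a) (h2 : a ≤ n + 1)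
    (m : ℕ) : m ∈ (barWord a (wordOf w) ++ [a]) ↔ 1 ≤ m ∧ m ≤ n + 1 := by
  simp only [List.mem_append, List.mem_singleton, barWord, List.mem_map, mem_wordOf]
  constructor
  · rintro (⟨x, ⟨hx1, hx2⟩, rfl⟩ | rfl)
    · split_ifs <;> omega
    · omega
  · rintro ⟨hm1, hm2⟩
    by_cases hma : m = a
    · right; exact hma
    · left
      refine ⟨if m < a then m else m - 1, ⟨?_, ?_⟩, ?_⟩ <;> split_ifs <;> omega

/-- if `w ≤_D y` in the right weak Bruhat order on `S_n`, then
`[w̄_a, a] ≤_D [ȳ_a, a]` in `S_{n+1}`. -/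
theorem stmt10 (n : ℕ) (w y : Equiv.Perm (Fin n)) (h : weakLE w y)
    (a : ℕ) (h1 : 1 ≤ a) (h2 : a ≤ n + 1) :
    wordLE (barWord a (wordOf w) ++ [a]) (barWord a (wordOf y) ++ [a]) := by
  intro i j hij hidx
  have hile : (barWord a (wordOf w) ++ [a]).idxOf i ≤ n + 1 := by
    have := List.idxOf_le_length (a := i) (l := barWord a (wordOf w) ++ [a])
    simpa [barWord, wordOf] using this
  have hjmem : j ∈ barWord a (wordOf w) ++ [a] := by
    rw [← List.idxOf_lt_length_iff]
    have := length_barW a w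
    omega
  rw [mem_barW a w h1 h2] at hjmem
  by_cases hi : 1 ≤ i ∧ i ≤ n + 1
  · by_cases hja : j = a
    · exfalso
      rw [hja] at hidx hij
      have hia : i ≠ a := Nat.ne_of_lt hij
      -- i is in the bar part, so its index is < n
      have hi' : (if (if i < a then i else i - 1) < a then (if i < a then i else i - 1)
          else (if i < a then i else i - 1) + 1) = i := by split_ifs <;> omega
      have hmemi : (if i < a then i else i - 1) ∈ wordOf w := by
        rw [mem_wordOf]; refine ⟨?_, ?_⟩ <;> split_ifs <;> omega
      have := indexOf_bar a (if i < a then i else i - 1) w hmemi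
      rw [hi'] at this
      have hlt : (wordOf w).idxOf (if i < a then i else i - 1) < n := by
        have := List.idxOf_lt_length_iff.mpr hmemi
        simpa [length_wordOf] using this
      rw [indexOf_a_barW a w] at hidx
      omega
    · by_cases hia : i = a
      · rw [hia, indexOf_a_barW a y]
        have hj' : (if (if j < a then j else j - 1) < a then (if j < a then j else j - 1)
            else (if j < a then j else j - 1) + 1) = j := by split_ifs <;> omega
        have hmemj : (if j < a then j else j - 1) ∈ wordOf y := by
          rw [mem_wordOf]; refine ⟨?_, ?_⟩ <;> split_ifs <;> omega
        have := indexOf_bar a (if j < a then j else j - 1) y hmemj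
        rw [hj'] at this
        rw [this]
        have := List.idxOf_lt_length_iff.mpr hmemj
        simpa [length_wordOf] using this
      · -- both i and j differ from a
        set i' := if i < a then i else i - 1 with hi'def
        set j' := if j < a then j else j - 1 with hj'def
        have hieq : (if i' < a then i' else i' + 1) = i := by
          rw [hi'def]; split_ifs <;> omega
        have hjeq : (if j' < a then j' else j' + 1) = j := by
          rw [hj'def]; split_ifs <;> omega
        have hi'j' : i' < j' := by rw [hi'def, hj'def]; split_ifs <;> omega
        have hmi : i' ∈ wordOf w := by
          rw [mem_wordOf, hi'def]; refine ⟨?_, ?_⟩ <;> split_ifs <;> omega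
        have hmj : j' ∈ wordOf w := by
          rw [mem_wordOf, hj'def]; refine ⟨?_, ?_⟩ <;> split_ifs <;> omega
        have hmi' : i' ∈ wordOf y := by rwa [mem_wordOf] at hmi ⊢
        have hmj' : j' ∈ wordOf y := by rwa [mem_wordOf] at hmj ⊢
        have ew1 := indexOf_bar a i' w hmi
        have ew2 := indexOf_bar a j' w hmj
        have ey1 := indexOf_bar a i' y hmi'
        have ey2 := indexOf_bar a j' y hmj'
        rw [hieq] at ew1 ey1
        rw [hjeq] at ew2 ey2
        rw [ew1, ew2] at hidx
        rw [ey1, ey2]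
        exact wordLE_wordOf h i' j' hi'j' hidx
  · have hiy : (barWord a (wordOf y) ++ [a]).idxOf i = n + 1 := by
      have := List.idxOf_of_notMem (l := barWord a (wordOf y) ++ [a]) (a := i)
        (by rw [mem_barW a y h1 h2]; omega)
      simpa [barWord, wordOf] using this
    have hjy : (barWord a (wordOf y) ++ [a]).idxOf j < n + 1 := by
      have := List.idxOf_lt_length_iff.mpr ((mem_barW a y h1 h2 j).mpr hjmem)
      simpa [barWord, wordOf] using this
    omega
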